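/- arXiv:2003.02605 — 2 statements merged into one kernel-verified Lean document; each statement's English description precedes it below -/
import Mathlib

section
/- Let $T = (t_1, t_2)$ be an interval and let $\mathcal{I}$ be a finite family of weighted intervals contained in $T$, with total optimal independent-set weight $\mathrm{OPT}$. Suppose every interval in an optimal independent set $\{C_1, \dots, C_K\}$ (ordered left to right, with $C_j = (x_j, y_j)$, so $y_j \leq x_{j+1}$) has weight $w_j \in [(1+\varepsilon)^{k_j}, (1+\varepsilon)^{k_j+1})$ for known integers $k_j$. Then the following greedy procedure succeeds and produces an independent set of weight at least $(1+\varepsilon)^{-1} \sum_j w_j$: starting with $t = t_1$, for $j = 1, \dots, K$, pick any interval $\hat{C}_j = (\hat{x}_j, \hat{y}_j) \subseteq (t, t_2)$ with weight in $[(1+\varepsilon)^{k_j}, (1+\varepsilon)^{k_j+1})$ minimizing $\hat{y}_j$, then set $t = \hat{y}_j$. Moreover, the greedy intervals satisfy $\hat{y}_j \leq y_j$ for all $j$ (so an interval always exists at each step), and the resulting intervals are pairwise disjoint. -/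
/-- Greedy exchange argument for weighted intervals: if `g` is built greedily (each step
picking an interval of the prescribed weight class, starting after the previous right
endpoint, with minimal right endpoint), and `C` is an independent set fitting the same
weight-class pattern, then `y (g j) ≤ y (C j)` for all `j`, the greedy intervals form a
chain (pairwise disjoint), and the greedy weight is at least `(1+ε)⁻¹` times that of `C`. -/
theorem stmt13 {ι : Type*} (S : Finset ι) (x y w : ι → ℝ) (ε t1 t2 : ℝ) (hε : 0 < ε)
    (hsub : ∀ i ∈ S, t1 ≤ x i ∧ x i < y i ∧ y i ≤ t2)
    (K : ℕ) (C g : ℕ → ι) (kcls : ℕ → ℤ)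
    (hC : ∀ j < K, C j ∈ S)
    (hCw : ∀ j < K, (1 + ε) ^ kcls j ≤ w (C j) ∧ w (C j) < (1 + ε) ^ (kcls j + 1))
    (hCchain : ∀ j, j + 1 < K → y (C j) ≤ x (C (j + 1)))
    (hg : ∀ j < K, g j ∈ S)
    (hgw : ∀ j < K, (1 + ε) ^ kcls j ≤ w (g j) ∧ w (g j) < (1 + ε) ^ (kcls j + 1))
    (hgstart : ∀ j < K, (if j = 0 then t1 else y (g (j - 1))) ≤ x (g j))
    (hgmin : ∀ j < K, ∀ i ∈ S,
      ((1 + ε) ^ kcls j ≤ w i ∧ w i < (1 + ε) ^ (kcls j + 1)) →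
      (if j = 0 then t1 else y (g (j - 1))) ≤ x i → y (g j) ≤ y i) :
    (∀ j < K, y (g j) ≤ y (C j)) ∧
    (∀ j j' : ℕ, j < j' → j' < K → y (g j) ≤ x (g j')) ∧
    (1 + ε)⁻¹ * (∑ j ∈ Finset.range K, w (C j)) ≤ ∑ j ∈ Finset.range K, w (g j) := by
  have hle : ∀ j < K, y (g j) ≤ y (C j) := by
    intro j
    induction j with
    | zero =>
      intro h0
      have := hgmin 0 h0 (C 0) (hC 0 h0) (hCw 0 h0) ?_
      · exact this
      · simp [(hsub (C 0) (hC 0 h0)).1]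
    | succ n ih =>
      intro hn1
      have hn : n < K := Nat.lt_of_succ_lt hn1
      refine hgmin (n+1) hn1 (C (n+1)) (hC _ hn1) (hCw _ hn1) ?_
      simp only [Nat.succ_ne_zero, if_false, Nat.add_sub_cancel]
      exact le_trans (ih hn) (hCchain n hn1)
  refine ⟨hle, ?_, ?_⟩
  · have step : ∀ j, j + 1 < K → y (g j) ≤ x (g (j+1)) := by
      intro j hj
      have := hgstart (j+1) hj
      simpa using this
    intro j j' hjj' hj'
    induction j' with
    | zero => omega
    | succ n ih =>
      rcases Nat.lt_succ_iff_lt_or_eq.mp hjj' with h | h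
      · have hn : n < K := Nat.lt_of_succ_lt hj'
        have h1 := ih h hn
        have h2 : x (g n) < y (g n) := (hsub (g n) (hg n hn)).2.1
        exact le_trans h1 (le_trans h2.le (step n hj'))
      · subst h; exact step j hj'
  · have hεpos : (0:ℝ) < 1 + ε := by linarith
    have key : ∑ j ∈ Finset.range K, w (C j) ≤ (1+ε) * ∑ j ∈ Finset.range K, w (g j) := by
      rw [Finset.mul_sum]
      refine Finset.sum_le_sum ?_
      intro j hj
      rw [Finset.mem_range] at hj
      have h1 := (hCw j hj).2
      have h2 := (hgw j hj).1
      calc w (C j) ≤ (1+ε) ^ (kcls j + 1) := h1.le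
        _ = (1+ε) * (1+ε) ^ kcls j := by rw [zpow_add_one₀ (ne_of_gt hεpos)]; ring
        _ ≤ (1+ε) * w (g j) := by nlinarith
    rw [inv_mul_le_iff₀ hεpos]
    linarith [key]
end

section
/- Consider the dynamic prefix-parity problem on an array $A$ of size $N$ (operations: set $A[i] \in \{0,1\}$; query $(\sum_{j \leq i} A[j]) \bmod 2$). Each operation can be simulated by $O(1)$ operations of a dynamic weighted maximum independent set of intervals data structure over $[0,N]$ (insert/delete a weighted interval; query the weight of the maximum weight independent set), as follows: maintain interval $[i-1, i)$ of weight 1 iff $A[i] = 1$; to answer a prefix query at $i$, insert the interval $[i, N]$ with weight $N$, query the maximum independent set weight $k$, return $(k - N) \bmod 2$, and delete $[i,N]$. The returned value equals $(\sum_{j \leq i} A[j]) \bmod 2$. -/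
lemma sum_eq_card_filter (i : ℕ) (A : ℕ → ℕ) (hA : ∀ j, A j ≤ 1) :
    ∑ j ∈ Finset.Icc 1 i, A j = ((Finset.Icc 1 i).filter (fun j => A j = 1)).card := by
  rw [Finset.card_filter]
  apply Finset.sum_congr rfl
  intro j _
  rcases Nat.le_one_iff_eq_zero_or_eq_one.mp (hA j) with h | h <;> simp [h]

/-- Prefix-parity via dynamic weighted independent set of intervals: with unit intervals
`[j-1, j)` present for `j` with `A j = 1` and a heavy interval `[i, N]` of weight `N`,
the maximum weight of an independent set is exactly `N + ∑_{j ≤ i} A j`, and subtracting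
`N` and reducing mod `2` recovers the prefix parity. -/
theorem stmt16 (N i : ℕ) (hi : 1 ≤ i) (hiN : i ≤ N) (A : ℕ → ℕ) (hA : ∀ j, A j ≤ 1) :
    IsGreatest
      { W : ℝ | ∃ T : Finset ℕ, T ⊆ (Finset.Icc 1 N).filter (fun j => A j = 1) ∧
          ∃ heavy : Bool,
            (∀ j ∈ T, ∀ j' ∈ T, j ≠ j' →
              Set.Ico ((j : ℝ) - 1) (j : ℝ) ∩ Set.Ico ((j' : ℝ) - 1) (j' : ℝ) = ∅) ∧
            (heavy = true → ∀ j ∈ T,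
              Set.Ico ((j : ℝ) - 1) (j : ℝ) ∩ Set.Icc (i : ℝ) (N : ℝ) = ∅) ∧
            W = (T.card : ℝ) + (if heavy then (N : ℝ) else 0) }
      ((N : ℝ) + ∑ j ∈ Finset.Icc 1 i, (A j : ℝ)) ∧
    ((N + ∑ j ∈ Finset.Icc 1 i, A j) - N) % 2 = (∑ j ∈ Finset.Icc 1 i, A j) % 2 := by
  have hcard := sum_eq_card_filter i A hA
  constructor
  · constructor
    · -- membership
      refine ⟨(Finset.Icc 1 i).filter (fun j => A j = 1), ?_, true, ?_, ?_, ?_⟩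
      · intro j hj
        simp only [Finset.mem_filter, Finset.mem_Icc] at hj ⊢
        exact ⟨⟨hj.1.1, hj.1.2.trans hiN⟩, hj.2⟩
      · intro j hj j' hj' hne
        simp only [Finset.mem_filter, Finset.mem_Icc] at hj hj'
        ext x
        simp only [Set.mem_inter_iff, Set.mem_Ico, Set.mem_empty_iff_false, iff_false]
        rintro ⟨⟨h1, h2⟩, ⟨h3, h4⟩⟩
        rcases lt_or_gt_of_ne hne with h | h
        · have : (j : ℝ) ≤ (j' : ℝ) - 1 := by
            have : (j : ℝ) + 1 ≤ (j' : ℝ) := by exact_mod_cast h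
            linarith
          linarith
        · have : (j' : ℝ) ≤ (j : ℝ) - 1 := by
            have : (j' : ℝ) + 1 ≤ (j : ℝ) := by exact_mod_cast h
            linarith
          linarith
      · intro _ j hj
        simp only [Finset.mem_filter, Finset.mem_Icc] at hj
        have hji : (j : ℝ) ≤ (i : ℝ) := by exact_mod_cast hj.1.2
        ext x
        simp only [Set.mem_inter_iff, Set.mem_Ico, Set.mem_Icc, Set.mem_empty_iff_false,
          iff_false]
        rintro ⟨⟨_, h2⟩, ⟨h3, _⟩⟩
        linarith
      · rw [if_pos rfl, ← Nat.cast_sum, hcard]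
        ring
    · -- upper bound
      rintro W ⟨T, hT, heavy, _, hheavy, rfl⟩
      have hsum_nonneg : (0 : ℝ) ≤ ∑ j ∈ Finset.Icc 1 i, (A j : ℝ) :=
        Finset.sum_nonneg fun j _ => by positivity
      cases heavy with
      | false =>
        have : T.card ≤ N := by
          calc T.card ≤ ((Finset.Icc 1 N).filter (fun j => A j = 1)).card :=
                Finset.card_le_card hT
            _ ≤ (Finset.Icc 1 N).card := Finset.card_filter_le _ _
            _ = N := by simp
        have : (T.card : ℝ) ≤ N := by exact_mod_cast this
        simp only [Bool.false_eq_true, if_false]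
        linarith
      | true =>
        have hsub : T ⊆ (Finset.Icc 1 i).filter (fun j => A j = 1) := by
          intro j hj
          have hj' := hT hj
          simp only [Finset.mem_filter, Finset.mem_Icc] at hj' ⊢
          refine ⟨⟨hj'.1.1, ?_⟩, hj'.2⟩
          by_contra hgt
          push_neg at hgt
          have hdisj := hheavy rfl j hj
          have hij : (i : ℝ) + 1 ≤ (j : ℝ) := by exact_mod_cast hgt
          have hjN : (j : ℝ) ≤ (N : ℝ) := by exact_mod_cast hj'.1.2
          have hx : ((j : ℝ) - 1) ∈ Set.Ico ((j : ℝ) - 1) (j : ℝ) ∩ Set.Icc (i : ℝ) (N : ℝ) :=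
            ⟨⟨le_refl _, by linarith⟩, by linarith, by linarith⟩
          rw [hdisj] at hx
          exact hx
        have hcardle : T.card ≤ ∑ j ∈ Finset.Icc 1 i, A j := by
          rw [hcard]; exact Finset.card_le_card hsub
        have : (T.card : ℝ) ≤ ∑ j ∈ Finset.Icc 1 i, (A j : ℝ) := by
          rw [← Nat.cast_sum]
          exact_mod_cast hcardle
        rw [if_pos rfl]
        linarith
  · omega
end
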